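/- Theorem (correctness of Algorithm 1 given convergence): If in some configuration C reachable in an execution of Algorithm 1 we have #ini = 0, then |#r − #b| ≤ 1 and no agent's color changes in any configuration reachable from C. -/

import Mathlib

/-- Agent colors of Algorithm 1. -/
inductive Col : Type
  | ini | r | b
deriving DecidableEq

/-- Base-station variable `RB`. -/
inductive RB : Type
  | r | b
deriving DecidableEq

/-- Flip the base-station variable. -/
def RB.flip : RB → RB
  | .r => .b
  | .b => .r

/-- The color assigned by the base station. -/
def RB.toCol : RB → Col
  | .r => .r
  | .b => .b

/-- An agent state: a color and a depth (`none` is ⊥). -/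
abbrev AgSt := Col × Option ℕ

/-- Effect of an interaction between the base station and one agent. -/
def bsStep (rb : RB) (a : AgSt) : RB × AgSt :=
  match a with
  | (.ini, some 1) => (rb.flip, (rb.toCol, some 1))
  | (c, none)      => (rb, (c, some 1))
  | a              => (rb, a)

/-- Effect of an interaction between two agents x and y:
first the depth propagation, then the color swap towards a smaller depth. -/
def agStep (x y : AgSt) : AgSt × AgSt :=
  let d : Option ℕ × Option ℕ :=
    match x.2, y.2 with
    | none, some e => (some (e + 1), some e)
    | some e, none => (some e, some (e + 1))
    | dx, dy       => (dx, dy)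
  match d with
  | (some dx, some dy) =>
      if dx < dy ∧ y.1 = Col.ini then ((Col.ini, some dx), (x.1, some dy))
      else if dy < dx ∧ x.1 = Col.ini then ((y.1, some dx), (Col.ini, some dy))
      else ((x.1, some dx), (y.1, some dy))
  | (dx, dy) => ((x.1, dx), (y.1, dy))

/-- A configuration: the base-station variable together with the agents' states. -/
abbrev Conf (n : ℕ) := RB × (Fin n → AgSt)

/-- One step of Algorithm 1 on a communication graph: either the base station
interacts with an adjacent agent, or two adjacent distinct agents interact. -/
def Step {n : ℕ} (Adj : Fin n → Fin n → Prop) (BAdj : Fin n → Prop)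
    (c c' : Conf n) : Prop :=
  (∃ i : Fin n, BAdj i ∧ c'.1 = (bsStep c.1 (c.2 i)).1 ∧
      c'.2 = Function.update c.2 i (bsStep c.1 (c.2 i)).2) ∨
  (c'.1 = c.1 ∧ ∃ i j : Fin n, i ≠ j ∧ Adj i j ∧
      c'.2 = Function.update (Function.update c.2 i (agStep (c.2 i) (c.2 j)).1) j
        (agStep (c.2 i) (c.2 j)).2)

/-- Number of agents whose color is `x`. -/
def cnt {n : ℕ} (C : Fin n → AgSt) (x : Col) : ℕ :=
  (Finset.univ.filter fun a => (C a).1 = x).card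

-- aux lemmas
lemma bsStep_snd_fst (rb : RB) (a : AgSt) (h : a.1 ≠ Col.ini) :
    (bsStep rb a).2.1 = a.1 := by
  obtain ⟨c, d⟩ := a
  cases c <;> cases d <;> simp_all [bsStep]

lemma agStep_fsts (x y : AgSt) (hx : x.1 ≠ Col.ini) (hy : y.1 ≠ Col.ini) :
    (agStep x y).1.1 = x.1 ∧ (agStep x y).2.1 = y.1 := by
  obtain ⟨cx, dx⟩ := x
  obtain ⟨cy, dy⟩ := y
  cases dx <;> cases dy <;> simp_all [agStep]

lemma agStep_perm (x y : AgSt) (c : Col) :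
    ((if (agStep x y).1.1 = c then 1 else 0) + (if (agStep x y).2.1 = c then 1 else 0) : ℕ)
    = (if x.1 = c then 1 else 0) + (if y.1 = c then 1 else 0) := by
  obtain ⟨cx, dx⟩ := x
  obtain ⟨cy, dy⟩ := y
  cases dx <;> cases dy <;> simp only [agStep] <;> split_ifs <;> simp_all <;> split_ifs <;> simp_all

lemma cnt_update {n : ℕ} (C : Fin n → AgSt) (i : Fin n) (a : AgSt) (x : Col) :
    cnt (Function.update C i a) x + (if (C i).1 = x then 1 else 0)
    = cnt C x + (if a.1 = x then 1 else 0) := by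
  have key : ∀ (D : Fin n → AgSt),
      cnt D x = (if (D i).1 = x then 1 else 0) + ∑ v ∈ Finset.univ.erase i, (if (D v).1 = x then 1 else 0) := by
    intro D
    rw [cnt, Finset.card_filter, ← Finset.add_sum_erase _ _ (Finset.mem_univ i)]
  rw [key, key C]
  have h1 : (Function.update C i a i).1 = a.1 := by simp
  have h2 : ∑ v ∈ Finset.univ.erase i, (if ((Function.update C i a) v).1 = x then 1 else 0)
      = ∑ v ∈ Finset.univ.erase i, (if (C v).1 = x then 1 else 0) := by
    apply Finset.sum_congr rfl
    intro v hv
    rw [Function.update_of_ne (Finset.ne_of_mem_erase hv)]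
  rw [h1, h2]
  omega

def AlgInv {n : ℕ} (c : Conf n) : Prop :=
  (cnt c.2 Col.r = cnt c.2 Col.b + 1 ∧ c.1 = RB.b) ∨
  (cnt c.2 Col.r = cnt c.2 Col.b ∧ c.1 = RB.r)

lemma bs_cases (rb : RB) (a : AgSt) :
    a = (Col.ini, some 1) ∨ ((bsStep rb a).1 = rb ∧ (bsStep rb a).2.1 = a.1) := by
  obtain ⟨ci, di⟩ := a
  cases ci <;> rcases di with _ | (_ | (_ | k)) <;> simp [bsStep]

lemma inv_step {n : ℕ} {Adj : Fin n → Fin n → Prop} {BAdj : Fin n → Prop}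
    {c c' : Conf n} (h : Step Adj BAdj c c') (hinv : AlgInv c) : AlgInv c' := by
  rcases h with ⟨i, _, h1, h2⟩ | ⟨h1, i, j, hij, _, h2⟩
  · -- base station step
    rcases bs_cases c.1 (c.2 i) with ha | ⟨hrb, hcol⟩
    · rw [ha] at h1 h2
      have hr := cnt_update c.2 i ((c.1).toCol, some 1) Col.r
      have hb := cnt_update c.2 i ((c.1).toCol, some 1) Col.b
      simp [ha] at hr hb
      simp [bsStep] at h1 h2
      unfold AlgInv at hinv ⊢
      rw [h1, h2]
      cases hc : c.1 <;> rw [hc] at hinv hr hb <;>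
        simp [RB.toCol, RB.flip] at hinv hr hb ⊢ <;> omega
    · have hr := cnt_update c.2 i (bsStep c.1 (c.2 i)).2 Col.r
      have hb := cnt_update c.2 i (bsStep c.1 (c.2 i)).2 Col.b
      rw [hcol] at hr hb
      unfold AlgInv at hinv ⊢
      rw [h1, h2, hrb]
      rcases hinv with ⟨e, hc⟩ | ⟨e, hc⟩
      · exact Or.inl ⟨by omega, hc⟩
      · exact Or.inr ⟨by omega, hc⟩
  · -- agent-agent step
    have hji : (Function.update c.2 i (agStep (c.2 i) (c.2 j)).1) j = c.2 j :=
      Function.update_of_ne (Ne.symm hij) _ _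
    have key : ∀ x : Col, cnt c'.2 x = cnt c.2 x := by
      intro x
      have h1' := cnt_update (Function.update c.2 i (agStep (c.2 i) (c.2 j)).1) j
        (agStep (c.2 i) (c.2 j)).2 x
      have h2' := cnt_update c.2 i (agStep (c.2 i) (c.2 j)).1 x
      rw [hji] at h1'
      have hp := agStep_perm (c.2 i) (c.2 j) x
      rw [← h2] at h1'
      omega
    unfold AlgInv at hinv ⊢
    rw [h1, key, key]
    exact hinv

lemma step_colors {n : ℕ} {Adj : Fin n → Fin n → Prop} {BAdj : Fin n → Prop}
    {c c' : Conf n} (h : Step Adj BAdj c c')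
    (hno : ∀ v, (c.2 v).1 ≠ Col.ini) : ∀ v, (c'.2 v).1 = (c.2 v).1 := by
  rcases h with ⟨i, _, _, h2⟩ | ⟨_, i, j, hij, _, h2⟩
  · intro v
    rw [h2, Function.update_apply]
    split
    · rename_i he; subst he; exact bsStep_snd_fst _ _ (hno v)
    · rfl
  · intro v
    rw [h2]
    by_cases hv : v = j
    · rw [hv, Function.update_self]
      exact (agStep_fsts _ _ (hno i) (hno j)).2
    · rw [Function.update_of_ne hv, Function.update_apply]
      split
      · rename_i he; subst he
        exact (agStep_fsts _ _ (hno v) (hno j)).1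
      · rfl

lemma reach_inv {n : ℕ} {Adj : Fin n → Fin n → Prop} {BAdj : Fin n → Prop}
    {C : Conf n}
    (hreach : Relation.ReflTransGen (Step Adj BAdj)
      (RB.r, fun _ => (Col.ini, none)) C) : AlgInv C := by
  induction hreach with
  | refl =>
    right
    refine ⟨?_, rfl⟩
    simp [cnt]
  | tail h1 h2 ih => exact inv_step h2 ih

theorem stmt15 (n : ℕ) (Adj : Fin n → Fin n → Prop) (BAdj : Fin n → Prop)
    (C : Conf n)
    (hreach : Relation.ReflTransGen (Step Adj BAdj)
      (RB.r, fun _ => (Col.ini, none)) C)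
    (hini : cnt C.2 .ini = 0) :
    (cnt C.2 .r ≤ cnt C.2 .b + 1 ∧ cnt C.2 .b ≤ cnt C.2 .r + 1) ∧
    ∀ C', Relation.ReflTransGen (Step Adj BAdj) C C' →
      ∀ v : Fin n, (C'.2 v).1 = (C.2 v).1 := by
  have hinvC : AlgInv C := reach_inv hreach
  have hno : ∀ v, (C.2 v).1 ≠ Col.ini := by
    intro v hv
    have hmem : v ∈ Finset.univ.filter (fun a => (C.2 a).1 = Col.ini) := by
      simp [hv]
    rw [cnt, Finset.card_eq_zero] at hini
    rw [hini] at hmem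
    exact absurd hmem (Finset.notMem_empty v)
  constructor
  · rcases hinvC with ⟨e, _⟩ | ⟨e, _⟩ <;> omega
  · intro C' h
    induction h with
    | refl => intro v; rfl
    | @tail b c' h1 h2 ih =>
      intro v
      rw [← ih v]
      exact step_colors h2 (fun w => (ih w) ▸ hno w) v
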